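/- For any n ∈ -ℕ and measurable C ⊆ [0,1), the function x ↦ 2^n · #((x + 2^n ℤ) ∩ C) on [0,1) is a version of the conditional expectation E(1_C | F_n), where F_n = {(A + 2^n ℤ) ∩ [0,1) : A Lebesgue measurable}; that is, for every A' ∈ F_n, ∫_{A'} 2^n · #((x + 2^n ℤ) ∩ C) dμ(x) = μ(A' ∩ C). -/

import Mathlib

open MeasureTheory Set
open scoped Classical ENNReal

lemma aux_card (h : ℝ) (hpos : 0 < h) (N : ℤ) (hhN : h * N = 1)
    (A : Set ℝ) (y : ℝ) (hy0 : 0 ≤ y) (hy1 : y < 1)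
    {inst : DecidablePred fun k : ℤ => y - (k : ℝ) * h ∈
          {x : ℝ | x ∈ Set.Ico (0:ℝ) 1 ∧ ∃ j : ℤ, x + (j : ℝ) * h ∈ A}} :
    (@Finset.filter ℤ
        (fun k : ℤ => y - (k : ℝ) * h ∈
          {x : ℝ | x ∈ Set.Ico (0:ℝ) 1 ∧ ∃ j : ℤ, x + (j : ℝ) * h ∈ A})
        inst (Finset.Ioo (-N) N)).card
      = if (∃ j : ℤ, y + (j : ℝ) * h ∈ A) then N.toNat else 0 := by
  have hNh : (N:ℝ) * h = 1 := by rw [mul_comm]; exact hhN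
  by_cases hPy : ∃ j : ℤ, y + (j : ℝ) * h ∈ A
  · rw [if_pos hPy]
    set q : ℤ := ⌊y / h⌋ with hq
    have hq0 : 0 ≤ q := Int.floor_nonneg.2 (div_nonneg hy0 hpos.le)
    have hqN : q < N := Int.floor_lt.2 (by rw [div_lt_iff₀ hpos]; linarith)
    have hfe : (Finset.Ioo (-N) N).filter
        (fun k : ℤ => y - (k : ℝ) * h ∈
          {x : ℝ | x ∈ Set.Ico (0:ℝ) 1 ∧ ∃ j : ℤ, x + (j : ℝ) * h ∈ A})
        = Finset.Ioc (q - N) q := by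
      ext k
      simp only [Finset.mem_filter, Finset.mem_Ioo, Finset.mem_Ioc, Set.mem_setOf_eq,
        Set.mem_Ico]
      constructor
      · rintro ⟨⟨-, -⟩, ⟨h0, h1⟩, -⟩
        have hk1 : k ≤ q := Int.le_floor.2 (by rw [le_div_iff₀ hpos]; linarith)
        have hkN : ((k:ℝ) + N) * h = (k:ℝ) * h + 1 := by rw [add_mul, hNh]
        have hk2 : q < k + N := Int.floor_lt.2 (by
          push_cast
          rw [div_lt_iff₀ hpos, hkN]
          linarith)
        omega
      · rintro ⟨hk1, hk2⟩
        have hkq : (k:ℝ) ≤ y / h :=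
          le_trans (by exact_mod_cast hk2) (Int.floor_le _)
        have hkh : (k:ℝ) * h ≤ y := by rwa [← le_div_iff₀ hpos]
        have hkN : ((k:ℝ) + N) * h = (k:ℝ) * h + 1 := by rw [add_mul, hNh]
        have hq2 : (y / h : ℝ) < (k:ℝ) + N := by
          have := Int.floor_lt.1 (show q < k + N by omega)
          push_cast at this; linarith
        have hy2 : y < (k:ℝ) * h + 1 := by
          have := (div_lt_iff₀ hpos).1 hq2
          rw [hkN] at this; linarith
        refine ⟨⟨by omega, by omega⟩, ⟨by linarith, by linarith⟩, ?_⟩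
        obtain ⟨j, hj⟩ := hPy
        refine ⟨j + k, ?_⟩
        have he : y - (k:ℝ) * h + ((j + k : ℤ) : ℝ) * h = y + (j:ℝ) * h := by
          push_cast; ring
        rw [he]; exact hj
    rw [hfe, Int.card_Ioc]
    omega
  · rw [if_neg hPy]
    rw [Finset.card_eq_zero, Finset.filter_eq_empty_iff]
    rintro k - ⟨-, j, hj⟩
    refine hPy ⟨j - k, ?_⟩
    have he : y + ((j - k : ℤ) : ℝ) * h = y - (k:ℝ) * h + (j:ℝ) * h := by
      push_cast; ring
    rw [he]; exact hj


theorem lattice_count_is_conditional_expectation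
    (m : ℕ) (C : Set ℝ) (hCm : MeasurableSet C) (hC1 : C ⊆ Set.Ico (0:ℝ) 1)
    (A A' : Set ℝ) (hAm : MeasurableSet A)
    (hA' : A' = {x : ℝ | x ∈ Set.Ico (0:ℝ) 1 ∧
      ∃ k : ℤ, x + (k : ℝ) * (2:ℝ) ^ (-(m:ℤ)) ∈ A}) :
    ∫ x in A',
        (2:ℝ) ^ (-(m:ℤ)) *
          (Nat.card {k : ℤ // x + (k : ℝ) * (2:ℝ) ^ (-(m:ℤ)) ∈ C} : ℝ) =
      (volume (A' ∩ C)).toReal := by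
  classical
  set h : ℝ := (2:ℝ) ^ (-(m:ℤ)) with hh
  have hpos : 0 < h := by positivity
  set N : ℤ := 2 ^ m with hNdef
  have hNnn : 0 ≤ N := by positivity
  have hhN : h * (N:ℝ) = 1 := by
    rw [hh, hNdef]
    push_cast
    rw [← zpow_natCast (2:ℝ) m, ← zpow_add₀ (by norm_num : (2:ℝ) ≠ 0)]
    norm_num
  have hmemA' : ∀ y : ℝ, y ∈ A' ↔ (y ∈ Set.Ico (0:ℝ) 1 ∧ ∃ j : ℤ, y + (j:ℝ) * h ∈ A) := by
    intro y; rw [hA']; rfl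
  have hA'meas : MeasurableSet A' := by
    have : A' = Set.Ico (0:ℝ) 1 ∩ ⋃ k : ℤ, (fun x : ℝ => x + (k:ℝ) * h) ⁻¹' A := by
      rw [hA']; ext x; simp [Set.mem_iUnion]
    rw [this]
    exact measurableSet_Ico.inter
      (MeasurableSet.iUnion fun k => (measurable_add_const _) hAm)
  set D : ℤ → Set ℝ := fun k => (fun x : ℝ => x + (k:ℝ) * h) ⁻¹' C with hD
  set T : ℤ → Set ℝ := fun k => (fun x : ℝ => x - (k:ℝ) * h) ⁻¹' A' with hT
  have hDmeas : ∀ k, MeasurableSet (D k) := fun k => (measurable_add_const _) hCm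
  have hTmeas : ∀ k, MeasurableSet (T k) := fun k => (measurable_id.sub_const _) hA'meas
  have hCfin : volume C < ⊤ :=
    lt_of_le_of_lt (measure_mono hC1) (by simp [Real.volume_Ico])
  -- pointwise rewriting of the integrand on A'
  have hintegrand : ∀ x ∈ A',
      h * (Nat.card {k : ℤ // x + (k:ℝ) * h ∈ C} : ℝ)
        = ∑ k ∈ Finset.Ioo (-N) N, (h * (D k).indicator (fun _ => (1:ℝ)) x) := by
    intro x hx
    obtain ⟨⟨hx0, hx1⟩, -⟩ := (hmemA' x).1 hx
    have hset : {k : ℤ | x + (k:ℝ) * h ∈ C}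
        = ↑((Finset.Ioo (-N) N).filter (fun k : ℤ => x + (k:ℝ) * h ∈ C)) := by
      ext k
      simp only [Set.mem_setOf_eq, Finset.coe_filter, Finset.mem_Ioo]
      constructor
      · intro hk
        obtain ⟨hk0, hk1⟩ := hC1 hk
        have hl : (-1:ℝ) < (k:ℝ) * h := by linarith
        have hu : (k:ℝ) * h < 1 := by linarith
        have hNh : (N:ℝ) * h = 1 := by rw [mul_comm]; exact hhN
        have h1 : ((-N : ℤ):ℝ) < (k:ℝ) := by
          rw [← mul_lt_mul_iff_of_pos_right hpos]
          push_cast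
          nlinarith
        have h2 : ((k:ℝ)) < ((N : ℤ):ℝ) := by
          rw [← mul_lt_mul_iff_of_pos_right hpos]
          nlinarith
        exact ⟨⟨by exact_mod_cast h1, by exact_mod_cast h2⟩, hk⟩
      · exact fun hk => hk.2
    calc h * (Nat.card {k : ℤ // x + (k:ℝ) * h ∈ C} : ℝ)
        = h * (((Finset.Ioo (-N) N).filter (fun k : ℤ => x + (k:ℝ) * h ∈ C)).card : ℝ) := by
          congr 2
          calc Nat.card {k : ℤ // x + (k:ℝ) * h ∈ C}
              = ({k : ℤ | x + (k:ℝ) * h ∈ C}).ncard := Nat.card_coe_set_eq _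
            _ = _ := by rw [hset, Set.ncard_coe_finset]
      _ = ∑ k ∈ Finset.Ioo (-N) N, (h * (D k).indicator (fun _ => (1:ℝ)) x) := by
          rw [← Finset.mul_sum]
          congr 1
          rw [← Finset.sum_boole]
          refine Finset.sum_congr rfl fun k _ => ?_
          simp [hD, Set.indicator_apply, Set.mem_preimage]
  -- integrability
  have hInt : ∀ k : ℤ, IntegrableOn (fun x => h * (D k).indicator (fun _ => (1:ℝ)) x) A' volume := by
    intro k
    apply Integrable.integrableOn
    apply Integrable.const_mul
    rw [integrable_indicator_iff (hDmeas k)]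
    refine integrableOn_const (ne_of_lt ?_)
    have : volume (D k) = volume C := measure_preimage_add_right volume ((k:ℝ) * h) C
    rw [this]; exact hCfin
  have hstep : (∫ x in A', h * (Nat.card {k : ℤ // x + (k:ℝ) * h ∈ C} : ℝ))
      = ∑ k ∈ Finset.Ioo (-N) N, h * (volume (A' ∩ D k)).toReal := by
    rw [setIntegral_congr_fun hA'meas hintegrand,
      integral_finset_sum _ (fun k _ => hInt k)]
    refine Finset.sum_congr rfl fun k _ => ?_
    rw [integral_const_mul, setIntegral_indicator (hDmeas k), setIntegral_const,
      smul_eq_mul, mul_one, measureReal_def]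
  -- translation invariance
  have htrans : ∀ k : ℤ, volume (A' ∩ D k) = volume (T k ∩ C) := by
    intro k
    have hpre : (fun z : ℝ => z + (-((k:ℝ) * h))) ⁻¹' (A' ∩ D k) = T k ∩ C := by
      ext z
      simp only [Set.mem_preimage, Set.mem_inter_iff, hD, hT]
      have e2 : z + -((k:ℝ) * h) + (k:ℝ) * h = z := by ring
      have e1 : z + -((k:ℝ) * h) = z - (k:ℝ) * h := by ring
      rw [e2, e1]
    rw [← hpre, measure_preimage_add_right]
  -- the key summation identity
  have hsum : ∑ k ∈ Finset.Ioo (-N) N, volume (T k ∩ C)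
      = (N.toNat : ℝ≥0∞) * volume (A' ∩ C) := by
    have hpt : ∀ y : ℝ, (∑ k ∈ Finset.Ioo (-N) N,
          (T k ∩ C).indicator (fun _ => (1:ℝ≥0∞)) y)
        = (N.toNat : ℝ≥0∞) * (A' ∩ C).indicator (fun _ => (1:ℝ≥0∞)) y := by
      intro y
      by_cases hyC : y ∈ C
      · obtain ⟨hy0, hy1⟩ := hC1 hyC
        have hite : ∀ k : ℤ, (T k ∩ C).indicator (fun _ => (1:ℝ≥0∞)) y
            = if y - (k:ℝ) * h ∈ A' then 1 else 0 := by
          intro k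
          simp [hT, Set.indicator_apply, Set.mem_inter_iff, hyC, Set.mem_preimage]
        rw [Finset.sum_congr rfl fun k _ => hite k, Finset.sum_boole]
        have hcard : ((Finset.Ioo (-N) N).filter (fun k : ℤ => y - (k:ℝ) * h ∈ A')).card
            = if (∃ j : ℤ, y + (j:ℝ) * h ∈ A) then N.toNat else 0 := by
          rw [hA']
          exact aux_card h hpos N hhN A y hy0 hy1
        rw [hcard]
        by_cases hPy : ∃ j : ℤ, y + (j:ℝ) * h ∈ A
        · have hyA' : y ∈ A' := (hmemA' y).2 ⟨⟨hy0, hy1⟩, hPy⟩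
          simp [hPy, Set.indicator_apply, Set.mem_inter_iff, hyC, hyA']
        · have hyA' : y ∉ A' := fun hy => hPy ((hmemA' y).1 hy).2
          simp [hPy, Set.indicator_apply, Set.mem_inter_iff, hyA']
      · simp [Set.indicator_apply, Set.mem_inter_iff, hyC]
    calc ∑ k ∈ Finset.Ioo (-N) N, volume (T k ∩ C)
        = ∑ k ∈ Finset.Ioo (-N) N, ∫⁻ y, (T k ∩ C).indicator (fun _ => (1:ℝ≥0∞)) y := by
          refine Finset.sum_congr rfl fun k _ => ?_
          rw [lintegral_indicator_const ((hTmeas k).inter hCm), one_mul]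
      _ = ∫⁻ y, ∑ k ∈ Finset.Ioo (-N) N, (T k ∩ C).indicator (fun _ => (1:ℝ≥0∞)) y := by
          rw [lintegral_finset_sum _ fun k _ =>
            (measurable_const.indicator ((hTmeas k).inter hCm))]
      _ = ∫⁻ y, (N.toNat : ℝ≥0∞) * (A' ∩ C).indicator (fun _ => (1:ℝ≥0∞)) y :=
          lintegral_congr hpt
      _ = (N.toNat : ℝ≥0∞) * volume (A' ∩ C) := by
          rw [lintegral_const_mul _ (measurable_const.indicator (hA'meas.inter hCm)),
            lintegral_indicator_const (hA'meas.inter hCm), one_mul]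
  -- put everything together
  have hfin : ∀ k : ℤ, volume (T k ∩ C) ≠ ⊤ := fun k =>
    (lt_of_le_of_lt (measure_mono Set.inter_subset_right) hCfin).ne
  rw [hstep]
  calc ∑ k ∈ Finset.Ioo (-N) N, h * (volume (A' ∩ D k)).toReal
      = h * ∑ k ∈ Finset.Ioo (-N) N, (volume (T k ∩ C)).toReal := by
        rw [← Finset.mul_sum]
        exact congrArg _ (Finset.sum_congr rfl fun k _ => by rw [htrans k])
    _ = h * ((∑ k ∈ Finset.Ioo (-N) N, volume (T k ∩ C)).toReal) := by
        rw [ENNReal.toReal_sum fun k _ => hfin k]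
    _ = h * (((N.toNat : ℝ≥0∞)) * volume (A' ∩ C)).toReal := by rw [hsum]
    _ = (volume (A' ∩ C)).toReal := by
        rw [ENNReal.toReal_mul, ENNReal.toReal_natCast, ← mul_assoc]
        have : ((N.toNat : ℝ)) = ((N:ℤ):ℝ) := by
          exact_mod_cast congrArg (Int.cast : ℤ → ℝ) (Int.toNat_of_nonneg hNnn)
        rw [this, hhN, one_mul]
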